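/- Fix an integer n ≥ 2 and let A be a Banach algebra. Suppose |||·||| is a norm on 𝒫ₙ(A) with the following two properties: (i) for each Banach space X and each |||·|||-continuous linear map Φ : 𝒫ₙ(A) → X, the polynomial P : A → X defined by P(a) = Φ(aⁿ) is continuous; (ii) every orthogonally additive continuous n-homogeneous polynomial P from A into any Banach space X can be expressed as P(a) = Φ(aⁿ) for some |||·|||-continuous linear map Φ : 𝒫ₙ(A) → X. Then there exist constants M₁, M₂ > 0 such that M₁‖a‖ ≤ |||a||| ≤ M₂‖a‖_{𝒫ₙ} for all a ∈ 𝒫ₙ(A). -/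

import Mathlib

set_option linter.unusedSectionVars false
set_option maxHeartbeats 1000000


/- Statement 8: If `|||·|||` is a norm on `𝒫ₙ(A)` such that (i) every `|||·|||`-continuous
linear map `Φ : 𝒫ₙ(A) → X` into a Banach space yields a continuous polynomial `a ↦ Φ(aⁿ)`,
and (ii) every orthogonally additive continuous n-homogeneous polynomial from `A` into a
Banach space factors as `Φ(aⁿ)` with `Φ` a `|||·|||`-continuous linear map, then there are
`M₁, M₂ > 0` with `M₁‖a‖ ≤ |||a||| ≤ M₂‖a‖_{𝒫ₙ}` on `𝒫ₙ(A)`. -/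

noncomputable section

universe u

/-- `npow1 mul a k = a^(k+1)` (products with respect to the multiplication `mul`). -/
def npow1 {A : Type*} (mul : A → A → A) (a : A) : ℕ → A
  | 0 => a
  | k + 1 => mul a (npow1 mul a k)

/-- `npower mul a n = aⁿ` for `n ≥ 1` (junk value `a` for `n = 0`). -/
def npower {A : Type*} (mul : A → A → A) (a : A) (n : ℕ) : A :=
  npow1 mul a (n - 1)

/-- `𝒫ₙ(A)`: the linear span of the set of n-th powers of elements of `A`. -/
def PnSubmodule {A : Type*} [AddCommGroup A] [Module ℂ A] (mul : A → A → A) (n : ℕ) :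
    Submodule ℂ A :=
  Submodule.span ℂ {x : A | ∃ a : A, x = npower mul a n}

/-- The norm `‖·‖_{𝒫ₙ}` on `𝒫ₙ(A)`. -/
def PnNorm {A : Type*} [NormedAddCommGroup A] (mul : A → A → A) (n : ℕ) (a : A) : ℝ :=
  sInf {r : ℝ | ∃ (m : ℕ) (c : Fin m → A),
    a = ∑ j, npower mul (c j) n ∧ r = ∑ j, ‖c j‖ ^ n}

namespace Stmt8
variable {A : Type u} [NonUnitalNormedRing A] [NormedSpace ℂ A] [IsScalarTower ℂ A A]
  [SMulCommClass ℂ A A]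

lemma npow1_smul (z : ℂ) (a : A) : ∀ k, npow1 (fun a b : A => a * b) (z • a) k
    = z ^ (k + 1) • npow1 (fun a b : A => a * b) a k
  | 0 => by simp [npow1]
  | k+1 => by
    simp only [npow1, npow1_smul z a k, smul_mul_assoc, mul_smul_comm, smul_smul]
    rw [← pow_succ]

lemma npow1_zero : ∀ k, npow1 (fun a b : A => a * b) (0 : A) k = 0
  | 0 => rfl
  | k+1 => by simp [npow1]

lemma mul_npow1 (a b : A) (h : a * b = 0) : ∀ k, a * npow1 (fun a b : A => a * b) b k = 0
  | 0 => h
  | k+1 => by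
    show a * (b * npow1 _ b k) = 0
    rw [← mul_assoc, h, zero_mul]

lemma npow1_orth (a b : A) (hab : a * b = 0) (hba : b * a = 0) :
    ∀ k, npow1 (fun a b : A => a * b) (a + b) k
      = npow1 (fun a b : A => a * b) a k + npow1 (fun a b : A => a * b) b k
  | 0 => rfl
  | k+1 => by
    show (a + b) * npow1 _ (a+b) k = a * npow1 _ a k + b * npow1 _ b k
    rw [npow1_orth a b hab hba k, add_mul, mul_add, mul_add,
      mul_npow1 a b hab k, mul_npow1 b a hba k]
    abel

def mulCMM (A : Type u) [NonUnitalNormedRing A] [NormedSpace ℂ A] [IsScalarTower ℂ A A]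
    [SMulCommClass ℂ A A] : (k : ℕ) → ContinuousMultilinearMap ℂ (fun _ : Fin (k+1) => A) A
  | 0 => (continuousMultilinearCurryFin1 ℂ A A).symm (ContinuousLinearMap.id ℂ A)
  | k+1 =>
    ContinuousLinearMap.uncurryLeft (Ei := fun _ : Fin (k+2) => A)
      (((ContinuousLinearMap.compContinuousMultilinearMapL ℂ (fun _ : Fin (k+1) => A) A A).flip
        (mulCMM A k)).comp (ContinuousLinearMap.mul ℂ A))

lemma mulCMM_const (a : A) : ∀ k, mulCMM A k (fun _ => a) = npow1 (fun a b : A => a * b) a k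
  | 0 => by simp [mulCMM, npow1]
  | k+1 => by
    show _ = a * npow1 (fun a b : A => a * b) a k
    rw [← mulCMM_const a k]
    simp [mulCMM, ContinuousLinearMap.uncurryLeft, Fin.tail]
    rfl


def NSp {E : Type u} (_N : E → ℝ) : Type u := E

instance {E : Type u} [AddCommGroup E] (N : E → ℝ) : AddCommGroup (NSp N) :=
  inferInstanceAs (AddCommGroup E)

instance {E : Type u} [AddCommGroup E] [Module ℂ E] (N : E → ℝ) : Module ℂ (NSp N) :=
  inferInstanceAs (Module ℂ E)


theorem exists_banach_embedding {E : Type u} [AddCommGroup E] [Module ℂ E] (N : E → ℝ)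
    (hN0 : ∀ a, N a = 0 ↔ a = 0)
    (hNsmul : ∀ (z : ℂ) a, N (z • a) = ‖z‖ * N a)
    (hNadd : ∀ a b, N (a + b) ≤ N a + N b) :
    ∃ (X : Type u) (i1 : NormedAddCommGroup X),
      ∃ (_ : @NormedSpace ℂ X _ i1.toSeminormedAddCommGroup)
        (_ : @CompleteSpace X i1.toUniformSpace) (Φ : E →ₗ[ℂ] X),
        ∀ a, @norm X i1.toNorm (Φ a) = N a := by
  have hneg : ∀ a : E, N (-a) = N a := by
    intro a
    have := hNsmul (-1) a
    simpa using this
  letI iN : NormedAddCommGroup (NSp N) := AddGroupNorm.toNormedAddCommGroup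
    { toFun := N
      map_zero' := (hN0 0).mpr rfl
      add_le' := hNadd
      neg' := hneg
      eq_zero_of_map_eq_zero' := fun a h => (hN0 a).mp h }
  letI iS : NormedSpace ℂ (NSp N) :=
    { (inferInstance : Module ℂ (NSp N)) with
      norm_smul_le := fun z x => le_of_eq (hNsmul z x) }
  let j : E →ₗ[ℂ] NSp N :=
    { toFun := fun x => x, map_add' := fun _ _ => rfl, map_smul' := fun _ _ => rfl }
  let Φ : E →ₗ[ℂ] UniformSpace.Completion (NSp N) :=
    ((UniformSpace.Completion.toComplₗᵢ (𝕜 := ℂ) (E := NSp N)).toLinearMap).comp j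
  refine ⟨UniformSpace.Completion (NSp N), inferInstance, inferInstance, inferInstance,
    Φ, fun a => ?_⟩
  show ‖(UniformSpace.Completion.toComplₗᵢ (𝕜 := ℂ) (E := NSp N)) (j a)‖ = N a
  rw [LinearIsometry.norm_map]
  rfl

end Stmt8

theorem statement8 (n : ℕ) (hn : 2 ≤ n)
    (A : Type u) [NonUnitalNormedRing A] [NormedSpace ℂ A] [IsScalarTower ℂ A A]
    [SMulCommClass ℂ A A] [CompleteSpace A]
    -- `|||·|||` is a norm on `𝒫ₙ(A)`:
    (N : ↥(PnSubmodule (fun a b : A => a * b) n) → ℝ)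
    (hN0 : ∀ a, N a = 0 ↔ a = 0)
    (hNsmul : ∀ (z : ℂ) a, N (z • a) = ‖z‖ * N a)
    (hNadd : ∀ a b, N (a + b) ≤ N a + N b)
    -- (i) every `|||·|||`-continuous linear map into a Banach space yields a continuous
    -- polynomial `a ↦ Φ(aⁿ)`:
    (hi : ∀ (X : Type u), ∀ (_ : NormedAddCommGroup X) (_ : NormedSpace ℂ X)
      (_ : CompleteSpace X) (Φ : ↥(PnSubmodule (fun a b : A => a * b) n) →ₗ[ℂ] X),
      (∃ C : ℝ, ∀ a, ‖Φ a‖ ≤ C * N a) →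
      Continuous fun a : A =>
        Φ ⟨npower (fun a b : A => a * b) a n, Submodule.subset_span ⟨a, rfl⟩⟩)
    -- (ii) every orthogonally additive continuous n-homogeneous polynomial factors through
    -- a `|||·|||`-continuous linear map:
    (hii : ∀ (X : Type u), ∀ (_ : NormedAddCommGroup X) (_ : NormedSpace ℂ X)
      (_ : CompleteSpace X) (P : A → X),
      (∃ φ : ContinuousMultilinearMap ℂ (fun _ : Fin n => A) X, ∀ a : A, P a = φ fun _ => a) →
      (∀ a b : A, a * b = 0 → b * a = 0 → P (a + b) = P a + P b) →
      ∃ Φ : ↥(PnSubmodule (fun a b : A => a * b) n) →ₗ[ℂ] X,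
        (∃ C : ℝ, ∀ a, ‖Φ a‖ ≤ C * N a) ∧
        ∀ a : A, P a =
          Φ ⟨npower (fun a b : A => a * b) a n, Submodule.subset_span ⟨a, rfl⟩⟩) :
    ∃ M₁ M₂ : ℝ, 0 < M₁ ∧ 0 < M₂ ∧
      ∀ a : ↥(PnSubmodule (fun a b : A => a * b) n),
        M₁ * ‖(a : A)‖ ≤ N a ∧
        N a ≤ M₂ * PnNorm (fun a b : A => a * b) n (a : A) := by
  classical
  obtain ⟨m, rfl⟩ : ∃ m, n = m + 1 := ⟨n - 1, by omega⟩
  have hN0' : N 0 = 0 := (hN0 0).mpr rfl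
  have hNneg : ∀ x, 0 ≤ N x := by
    intro x
    have h1 : N (-x) = N x := by simpa using hNsmul (-1) x
    have h2 := hNadd x (-x)
    rw [add_neg_cancel, hN0', h1] at h2
    linarith
  -- Part 1: lower bound
  obtain ⟨Φ₀, ⟨C, hC⟩, hrep⟩ := hii A inferInstance inferInstance inferInstance
    (fun a => npower (fun a b : A => a * b) a (m + 1))
    ⟨Stmt8.mulCMM A m, fun a => (Stmt8.mulCMM_const a m).symm⟩
    (fun a b hab hba => Stmt8.npow1_orth a b hab hba m)
  have hΦ₀ : ∀ x : ↥(PnSubmodule (fun a b : A => a * b) (m + 1)), (Φ₀ x : A) = x := by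
    rintro ⟨x, hx⟩
    induction hx using Submodule.span_induction with
    | mem x h =>
      obtain ⟨a, rfl⟩ := h
      exact (hrep a).symm
    | zero =>
      show Φ₀ 0 = (0 : A)
      rw [map_zero]
    | add x y hx hy px py =>
      show Φ₀ (⟨x, hx⟩ + ⟨y, hy⟩) = x + y
      rw [map_add, px, py]
    | smul z x hx px =>
      show Φ₀ (z • ⟨x, hx⟩) = z • x
      rw [map_smul, px]
  have hlow : ∀ x : ↥(PnSubmodule (fun a b : A => a * b) (m + 1)),
      ‖(x : A)‖ ≤ max C 1 * N x := by
    intro x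
    calc ‖(x : A)‖ = ‖Φ₀ x‖ := by rw [hΦ₀]
    _ ≤ C * N x := hC x
    _ ≤ max C 1 * N x := mul_le_mul_of_nonneg_right (le_max_left _ _) (hNneg x)
  -- Part 2: upper bound
  obtain ⟨X, i1, i2, i3, Φ, hΦ⟩ := Stmt8.exists_banach_embedding N hN0 hNsmul hNadd
  letI := i1; letI := i2; letI := i3
  have hcont := hi X i1 i2 i3 Φ ⟨1, fun a => by rw [hΦ, one_mul]⟩
  have hF0 : (⟨npower (fun a b : A => a * b) (0 : A) (m + 1),
      Submodule.subset_span ⟨0, rfl⟩⟩ : ↥(PnSubmodule (fun a b : A => a * b) (m + 1))) = 0 :=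
    Subtype.ext (Stmt8.npow1_zero m)
  have h0 := hcont.continuousAt (x := 0)
  rw [Metric.continuousAt_iff] at h0
  obtain ⟨δ, hδ, hsmall⟩ := h0 1 one_pos
  have key : ∀ a : A, ‖a‖ < δ →
      N ⟨npower (fun a b : A => a * b) a (m + 1), Submodule.subset_span ⟨a, rfl⟩⟩ < 1 := by
    intro a ha
    have h2 := hsmall (x := a) (by simpa [dist_eq_norm] using ha)
    rw [dist_eq_norm, hF0, map_zero, sub_zero, hΦ] at h2
    exact h2
  have hsm : ∀ (z : ℂ) (a : A),
      (⟨npower (fun a b : A => a * b) (z • a) (m + 1), Submodule.subset_span ⟨z • a, rfl⟩⟩ :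
        ↥(PnSubmodule (fun a b : A => a * b) (m + 1)))
      = z ^ (m + 1) • ⟨npower (fun a b : A => a * b) a (m + 1),
          Submodule.subset_span ⟨a, rfl⟩⟩ :=
    fun z a => Subtype.ext (Stmt8.npow1_smul z a m)
  set K : ℝ := (2 / δ) ^ (m + 1) with hKdef
  have hK : 0 < K := by positivity
  have hbound : ∀ a : A,
      N ⟨npower (fun a b : A => a * b) a (m + 1), Submodule.subset_span ⟨a, rfl⟩⟩
        ≤ K * ‖a‖ ^ (m + 1) := by
    intro a
    rcases eq_or_ne a 0 with rfl | ha
    · rw [hF0, hN0']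
      positivity
    · have hna : (0 : ℝ) < ‖a‖ := norm_pos_iff.mpr ha
      set t : ℝ := δ / (2 * ‖a‖) with htdef
      have ht : 0 < t := by positivity
      have h1 : ‖((t : ℂ)) • a‖ < δ := by
        rw [norm_smul, Complex.norm_real, Real.norm_of_nonneg ht.le, htdef]
        calc δ / (2 * ‖a‖) * ‖a‖ = δ / 2 := by field_simp
        _ < δ := by linarith
      have h2 := key ((t : ℂ) • a) h1
      rw [hsm, hNsmul, norm_pow, Complex.norm_real, Real.norm_of_nonneg ht.le] at h2
      have hts : t ^ (m + 1) * (K * ‖a‖ ^ (m + 1)) = 1 := by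
        rw [hKdef, htdef, ← mul_pow, ← mul_pow]
        have h1 : δ / (2 * ‖a‖) * (2 / δ * ‖a‖) = 1 := by field_simp
        rw [h1, one_pow]
      nlinarith [hNneg ⟨npower (fun a b : A => a * b) a (m + 1),
        Submodule.subset_span ⟨a, rfl⟩⟩, pow_pos ht (m + 1)]
  have hNsum : ∀ (k : ℕ) (g : Fin k → ↥(PnSubmodule (fun a b : A => a * b) (m + 1))),
      N (∑ j, g j) ≤ ∑ j, N (g j) := by
    intro k
    induction k with
    | zero => intro g; simp [hN0']
    | succ k ih =>
      intro g
      rw [Fin.sum_univ_succ, Fin.sum_univ_succ]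
      calc N (g 0 + ∑ j : Fin k, g j.succ) ≤ N (g 0) + N (∑ j : Fin k, g j.succ) :=
        hNadd _ _
      _ ≤ N (g 0) + ∑ j : Fin k, N (g j.succ) := by linarith [ih (fun j => g j.succ)]
  have hrep' : ∀ x : A, x ∈ PnSubmodule (fun a b : A => a * b) (m + 1) →
      ∃ (k : ℕ) (c : Fin k → A), x = ∑ j, npower (fun a b : A => a * b) (c j) (m + 1) := by
    intro x hx
    induction hx using Submodule.span_induction with
    | mem x h => obtain ⟨a, rfl⟩ := h; exact ⟨1, fun _ => a, by simp⟩
    | zero => exact ⟨0, fun j => 0, by simp⟩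
    | add x y hx hy px py =>
      obtain ⟨k₁, c₁, rfl⟩ := px
      obtain ⟨k₂, c₂, rfl⟩ := py
      refine ⟨k₁ + k₂, Fin.append c₁ c₂, ?_⟩
      rw [Fin.sum_univ_add]
      simp [Fin.append_left, Fin.append_right]
    | smul z x hx px =>
      obtain ⟨k, c, rfl⟩ := px
      obtain ⟨w, hw⟩ := IsAlgClosed.exists_pow_nat_eq z (n := m + 1) (by omega)
      refine ⟨k, fun j => w • c j, ?_⟩
      rw [Finset.smul_sum]
      refine Finset.sum_congr rfl fun j _ => ?_
      show z • npow1 (fun a b : A => a * b) (c j) m = npow1 (fun a b : A => a * b) (w • c j) m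
      rw [Stmt8.npow1_smul, hw]
  refine ⟨(max C 1)⁻¹, K, by positivity, hK, fun x => ⟨?_, ?_⟩⟩
  · rw [inv_mul_le_iff₀ (by positivity)]
    exact hlow x
  · have hSne : Set.Nonempty {r : ℝ | ∃ (k : ℕ) (c : Fin k → A),
        (x : A) = ∑ j, npower (fun a b : A => a * b) (c j) (m + 1)
          ∧ r = ∑ j, ‖c j‖ ^ (m + 1)} := by
      obtain ⟨k, c, hc⟩ := hrep' (x : A) x.2
      exact ⟨∑ j, ‖c j‖ ^ (m + 1), k, c, hc, rfl⟩
    have hlb : ∀ r ∈ {r : ℝ | ∃ (k : ℕ) (c : Fin k → A),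
        (x : A) = ∑ j, npower (fun a b : A => a * b) (c j) (m + 1)
          ∧ r = ∑ j, ‖c j‖ ^ (m + 1)}, N x / K ≤ r := by
      rintro r ⟨k, c, hxe, rfl⟩
      rw [div_le_iff₀ hK, mul_comm]
      have hxx : x = ∑ j, (⟨npower (fun a b : A => a * b) (c j) (m + 1),
          Submodule.subset_span ⟨c j, rfl⟩⟩ :
            ↥(PnSubmodule (fun a b : A => a * b) (m + 1))) := by
        apply Subtype.ext
        rw [hxe]
        push_cast
        rfl
      calc N x ≤ ∑ j, N ⟨npower (fun a b : A => a * b) (c j) (m + 1),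
          Submodule.subset_span ⟨c j, rfl⟩⟩ := by
            rw [hxx]; exact hNsum k _
      _ ≤ ∑ j, K * ‖c j‖ ^ (m + 1) := Finset.sum_le_sum fun j _ => hbound (c j)
      _ = K * ∑ j, ‖c j‖ ^ (m + 1) := by rw [Finset.mul_sum]
    have h := le_csInf hSne hlb
    rw [div_le_iff₀' hK] at h
    exact h

end
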